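/- arXiv:2501.06079 — 5 statements merged into one kernel-verified Lean document; each statement's English description precedes it below -/
import Mathlib

section
/- If a set-valued function f : X → 𝒫(Z) is K-e-convex, then for every x ∈ X the set f(x)+K is an e-convex subset of Z. -/
open scoped Classical Pointwise
noncomputable section

variable {X : Type*} [AddCommGroup X] [Module ℝ X] [TopologicalSpace X]
  [IsTopologicalAddGroup X] [ContinuousSMul ℝ X]
variable {Z : Type*} [AddCommGroup Z] [Module ℝ Z] [TopologicalSpace Z]
  [IsTopologicalAddGroup Z] [ContinuousSMul ℝ Z]

/-- A set is evenly convex (e-convex) if it is the intersection of an arbitrary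
(possibly empty) family of open half-spaces. -/
def IsEConvex {Y : Type*} [AddCommGroup Y] [Module ℝ Y] [TopologicalSpace Y]
    (C : Set Y) : Prop :=
  ∃ S : Set ((Y →L[ℝ] ℝ) × ℝ), C = ⋂ p ∈ S, {y | p.1 y < p.2}

/-- The evenly convex hull of `C`: the smallest e-convex set containing `C`. -/
def eco {Y : Type*} [AddCommGroup Y] [Module ℝ Y] [TopologicalSpace Y]
    (C : Set Y) : Set Y :=
  ⋂₀ {D : Set Y | IsEConvex D ∧ C ⊆ D}

/-- The negative polar cone of `K`. -/
def negPolar (K : Set Z) : Set (Z →L[ℝ] ℝ) := {z' | ∀ z ∈ K, z' z ≤ 0}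

/-- `S_{(x*,z*)}(x) = {z | ⟨x,x*⟩ + ⟨z,z*⟩ < 0}`. -/
def Sopen (x' : X →L[ℝ] ℝ) (z' : Z →L[ℝ] ℝ) (x : X) : Set Z := {z | x' x + z' z < 0}

/-- `S̄_{(x*,z*)}(x) = {z | ⟨x,x*⟩ + ⟨z,z*⟩ ≤ 0}`. -/
def Sclosed (x' : X →L[ℝ] ℝ) (z' : Z →L[ℝ] ℝ) (x : X) : Set Z := {z | x' x + z' z ≤ 0}

/-- Effective domain of a set-valued function. -/
def svDom (f : X → Set Z) : Set X := {x | f x ≠ ∅}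

/-- A set-valued function is proper if its domain is nonempty and no value is all of `Z`. -/
def SVProper (f : X → Set Z) : Prop := svDom f ≠ ∅ ∧ ∀ x, f x ≠ Set.univ

/-- The `K`-epigraph of a set-valued function. -/
def epiK (K : Set Z) (f : X → Set Z) : Set (X × Z) := {p | p.2 ∈ f p.1 + K}

/-- `f` is `K`-e-convex if its `K`-epigraph is e-convex. -/
def IsKEConvex (K : Set Z) (f : X → Set Z) : Prop := IsEConvex (epiK K f)

/-- The `K`-e-convex hull of `f`. -/
def KEco (K : Set Z) (f : X → Set Z) : X → Set Z := fun x => {z | (x, z) ∈ eco (epiK K f)}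

/-- `g` is a (set-valued) minorant of `f`: `g(x) ≤_K f(x)`, i.e. `f(x)+K ⊆ g(x)+K`. -/
def IsMinorant (K : Set Z) (f g : X → Set Z) : Prop := ∀ x, f x + K ⊆ g x + K

/-- A `C`-affine set-valued function. -/
def IsCAffine (K : Set Z) (C : Set X) (a : X → Set Z) : Prop :=
  ∃ x' : X →L[ℝ] ℝ, ∃ z' ∈ negPolar K \ {0}, ∃ zt : Z,
    ∀ x, a x = if x ∈ C then Sopen x' z' x + {zt} else ∅

/-- `M_f = eco (dom f)`. -/
def Mf (f : X → Set Z) : Set X := eco (svDom f)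

/-- The set of all `M_f`-affine minorants of `f`. -/
def Hf (K : Set Z) (f : X → Set Z) : Set (X → Set Z) :=
  {a | IsCAffine K (Mf f) a ∧ IsMinorant K f a}

/-- A 𝒞-affine set-valued function: `C`-affine for some e-convex `C`. -/
def IsCalAffine (K : Set Z) (a : X → Set Z) : Prop :=
  ∃ C : Set X, IsEConvex C ∧ IsCAffine K C a

/-- The set of all 𝒞-affine minorants of `f`. -/
def Cf (K : Set Z) (f : X → Set Z) : Set (X → Set Z) :=
  {a | IsCalAffine K a ∧ IsMinorant K f a}

/-- An e-affine set-valued function. -/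
def IsEAffine (K : Set Z) (a : X → Set Z) : Prop :=
  ∃ x' y' : X →L[ℝ] ℝ, ∃ z' ∈ negPolar K \ {0}, ∃ zt : Z, ∃ α : ℝ,
    ∀ x, a x = if y' x < α then Sopen x' z' x + {zt} else ∅

/-- The set of all e-affine minorants of `f`. -/
def Ef (K : Set Z) (f : X → Set Z) : Set (X → Set Z) :=
  {a | IsEAffine K a ∧ IsMinorant K f a}

/-- The modified negation of a subset of `Z`: `-∅ = Z`, `-Z = ∅`,
and the pointwise negation otherwise. -/
def negSet (A : Set Z) : Set Z :=
  if A = ∅ then Set.univ else if A = Set.univ then ∅ else -A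

/-- The c-conjugate of a set-valued function `f`, defined (by `∅`-extension) on
`X* × X* × Z* × ℝ`; its meaningful domain is `X* × X* × (K*∖{0}) × ℝ`. -/
def cConj (K : Set Z) (f : X → Set Z)
    (w : (X →L[ℝ] ℝ) × (X →L[ℝ] ℝ) × (Z →L[ℝ] ℝ) × ℝ) : Set Z :=
  if w.2.2.1 ∈ negPolar K \ {0} ∧ svDom f ⊆ {x | w.2.1 x < w.2.2.2} then
    negSet (eco (⋃ x : X, (f x + Sclosed w.1 w.2.2.1 (-x))))
  else ∅

/-- The c'-conjugate of `g : X* × X* × Z* × ℝ → 𝒫(Z)`. -/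
def cPrimeConj (g : (X →L[ℝ] ℝ) × (X →L[ℝ] ℝ) × (Z →L[ℝ] ℝ) × ℝ → Set Z)
    (x : X) : Set Z :=
  if ∀ w : (X →L[ℝ] ℝ) × (X →L[ℝ] ℝ) × (Z →L[ℝ] ℝ) × ℝ, g w ≠ ∅ → w.2.1 x < w.2.2.2 then
    ⋂ w ∈ {w : (X →L[ℝ] ℝ) × (X →L[ℝ] ℝ) × (Z →L[ℝ] ℝ) × ℝ | g w ≠ ∅},
      (Sclosed w.1 w.2.2.1 x + negSet (g w))
  else ∅

/-- The support function of the `K`-epigraph of `f` relative to open half-spaces,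
with values in `ℝ ∪ {±∞}`. -/
def sigmaF (K : Set Z) (f : X → Set Z)
    (w : (X →L[ℝ] ℝ) × (X →L[ℝ] ℝ) × (Z →L[ℝ] ℝ) × ℝ) : EReal :=
  if svDom f ⊆ {x | w.2.1 x < w.2.2.2} then
    ⨆ p ∈ epiK K f, ((w.1 p.1 + w.2.2.1 p.2 : ℝ) : EReal)
  else ⊤

/-- `η_C(x*,z*)`: `0` if the supremum of `⟨x,x*⟩+⟨z,z*⟩` over `C` is not attained
(every value is strictly below the supremum), `1` otherwise. -/
def etaSet (C : Set (X × Z)) (x' : X →L[ℝ] ℝ) (z' : Z →L[ℝ] ℝ) : ℕ :=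
  if ∀ p ∈ C, ((x' p.1 + z' p.2 : ℝ) : EReal) < ⨆ q ∈ C, ((x' q.1 + z' q.2 : ℝ) : EReal)
  then 0 else 1


theorem stmt0 [T2Space X] [LocallyConvexSpace ℝ X] [T2Space Z] [LocallyConvexSpace ℝ Z]
    (K : Set Z) (hKconv : Convex ℝ K) (hKcone : ∀ c : ℝ, 0 < c → c • K ⊆ K)
    (hK0 : ({0} : Set Z) ⊂ K) (hKtop : K ≠ Set.univ)
    (f : X → Set Z) (hf : IsKEConvex K f) :
    ∀ x : X, IsEConvex (f x + K) := by
  intro x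
  obtain ⟨S, hS⟩ := hf
  refine ⟨(fun p : ((X × Z) →L[ℝ] ℝ) × ℝ =>
      (p.1.comp (ContinuousLinearMap.inr ℝ X Z), p.2 - p.1 (x, 0))) '' S, ?_⟩
  ext z
  have hmem : z ∈ f x + K ↔ (x, z) ∈ epiK K f := Iff.rfl
  rw [hmem, hS]
  simp only [Set.mem_iInter, Set.mem_setOf_eq]
  have key : ∀ p : ((X × Z) →L[ℝ] ℝ) × ℝ,
      p.1 (x, z) = p.1.comp (ContinuousLinearMap.inr ℝ X Z) z + p.1 (x, 0) := by
    intro p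
    have hsplit : (x, z) = (x, (0 : Z)) + ((0 : X), z) := by simp
    rw [hsplit, map_add]
    simp [add_comm]
  constructor
  · intro h q hq
    rw [Set.mem_image] at hq
    obtain ⟨p, hp, rfl⟩ := hq
    have := h p hp
    rw [key p] at this
    simp only [Set.mem_setOf_eq]
    linarith
  · intro h p hp
    have := h _ (Set.mem_image_of_mem _ hp)
    simp only [Set.mem_setOf_eq, ContinuousLinearMap.comp_apply,
      ContinuousLinearMap.inr_apply] at this ⊢
    rw [key p]
    simp only [ContinuousLinearMap.comp_apply, ContinuousLinearMap.inr_apply]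
    linarith

end
end

section
/- For any nonempty subsets A and B of Z, eco(A + eco B) = eco(A + B), where + denotes the Minkowski sum. -/
open scoped Classical Pointwise
noncomputable section

variable {X : Type*} [AddCommGroup X] [Module ℝ X] [TopologicalSpace X]
  [IsTopologicalAddGroup X] [ContinuousSMul ℝ X]
variable {Z : Type*} [AddCommGroup Z] [Module ℝ Z] [TopologicalSpace Z]
  [IsTopologicalAddGroup Z] [ContinuousSMul ℝ Z]

lemma isEConvex_sInter' {Y : Type*} [AddCommGroup Y] [Module ℝ Y] [TopologicalSpace Y]
    {F : Set (Set Y)} (h : ∀ D ∈ F, IsEConvex D) : IsEConvex (⋂₀ F) := by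
  refine ⟨{p | ⋂₀ F ⊆ {y | p.1 y < p.2}}, ?_⟩
  apply Set.Subset.antisymm
  · intro y hy
    simp only [Set.mem_iInter]
    intro p hp
    exact hp hy
  · intro y hy
    simp only [Set.mem_iInter] at hy
    intro D hD
    obtain ⟨S, hS⟩ := h D hD
    rw [hS]
    simp only [Set.mem_iInter]
    intro p hp
    refine hy p (fun z hz => ?_)
    have hz' := Set.sInter_subset_of_mem hD hz
    rw [hS] at hz'
    exact Set.mem_iInter₂.mp hz' p hp

lemma isEConvex_eco' {Y : Type*} [AddCommGroup Y] [Module ℝ Y] [TopologicalSpace Y]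
    (C : Set Y) : IsEConvex (eco C) :=
  isEConvex_sInter' (fun _ hD => hD.1)

lemma subset_eco' {Y : Type*} [AddCommGroup Y] [Module ℝ Y] [TopologicalSpace Y]
    (C : Set Y) : C ⊆ eco C :=
  fun _ hy _ hD => hD.2 hy

lemma eco_min' {Y : Type*} [AddCommGroup Y] [Module ℝ Y] [TopologicalSpace Y]
    {C D : Set Y} (hD : IsEConvex D) (hCD : C ⊆ D) : eco C ⊆ D :=
  fun _ hy => hy D ⟨hD, hCD⟩

lemma isEConvex_preimage_add' {Y : Type*} [AddCommGroup Y] [Module ℝ Y] [TopologicalSpace Y]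
    {D : Set Y} (hD : IsEConvex D) (a : Y) : IsEConvex {z | a + z ∈ D} := by
  obtain ⟨S, hS⟩ := hD
  refine ⟨(fun p => (p.1, p.2 - p.1 a)) '' S, ?_⟩
  ext z
  simp only [Set.mem_setOf_eq, hS, Set.mem_iInter, Set.mem_image]
  constructor
  · rintro h p ⟨q, hq, rfl⟩
    have := h q hq
    simp only [Set.mem_setOf_eq, map_add] at this ⊢
    linarith
  · intro h p hp
    have := h (p.1, p.2 - p.1 a) ⟨p, hp, rfl⟩
    simp only [Set.mem_setOf_eq, map_add] at this ⊢
    linarith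

theorem stmt1 [T2Space Z] [LocallyConvexSpace ℝ Z]
    (A B : Set Z) (hA : A.Nonempty) (hB : B.Nonempty) :
    eco (A + eco B) = eco (A + B) := by
  apply Set.Subset.antisymm
  · apply eco_min' (isEConvex_eco' (A + B))
    rintro _ ⟨a, ha, z, hz, rfl⟩
    have hsub : eco B ⊆ {z | a + z ∈ eco (A + B)} := by
      apply eco_min' (isEConvex_preimage_add' (isEConvex_eco' (A + B)) a)
      intro b hb
      exact subset_eco' (A + B) (Set.add_mem_add ha hb)
    exact hsub hz
  · apply eco_min' (isEConvex_eco' (A + eco B))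
    intro x hx
    apply subset_eco'
    rcases hx with ⟨a, ha, b, hb, rfl⟩
    exact Set.add_mem_add ha (subset_eco' B hb)

end
end

section
/- Let C ⊆ X and let a : X → 𝒫(Z) be a C-affine set-valued function. If C is e-convex, then a is K-e-convex; moreover in this case a(x) = eco(a(x)+K) for every x ∈ X. -/
open scoped Classical Pointwise
noncomputable section

variable {X : Type*} [AddCommGroup X] [Module ℝ X] [TopologicalSpace X]
  [IsTopologicalAddGroup X] [ContinuousSMul ℝ X]
variable {Z : Type*} [AddCommGroup Z] [Module ℝ Z] [TopologicalSpace Z]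
  [IsTopologicalAddGroup Z] [ContinuousSMul ℝ Z]

lemma isEConvex_empty' {Y : Type*} [AddCommGroup Y] [Module ℝ Y] [TopologicalSpace Y] :
    IsEConvex (∅ : Set Y) := by
  refine ⟨{((0 : Y →L[ℝ] ℝ), (-1 : ℝ))}, ?_⟩
  ext y
  simp

lemma eco_of_isEConvex {Y : Type*} [AddCommGroup Y] [Module ℝ Y] [TopologicalSpace Y]
    {D : Set Y} (h : IsEConvex D) : eco D = D := by
  apply subset_antisymm
  · exact Set.sInter_subset_of_mem ⟨h, subset_rfl⟩
  · exact Set.subset_sInter fun D' hD' => hD'.2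

theorem stmt3 [T2Space X] [LocallyConvexSpace ℝ X] [T2Space Z] [LocallyConvexSpace ℝ Z]
    (K : Set Z) (hKconv : Convex ℝ K) (hKcone : ∀ c : ℝ, 0 < c → c • K ⊆ K)
    (hK0 : ({0} : Set Z) ⊂ K) (hKtop : K ≠ Set.univ)
    (C : Set X) (a : X → Set Z) (haff : IsCAffine K C a) (hC : IsEConvex C) :
    IsKEConvex K a ∧ ∀ x : X, a x = eco (a x + K) := by
  obtain ⟨x', z', hz', zt, ha⟩ := haff
  have h0K : (0 : Z) ∈ K := hK0.1 rfl
  have hz'neg : ∀ z ∈ K, z' z ≤ 0 := hz'.1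
  -- value of a on C
  have haxeq : ∀ x ∈ C, a x = {z | x' x + z' z < z' zt} := by
    intro x hx
    rw [ha x, if_pos hx]
    ext z
    constructor
    · rintro ⟨s, hs, t, ht, rfl⟩
      simp only [Set.mem_singleton_iff] at ht
      subst ht
      have hs' : x' x + z' s < 0 := hs
      simp only [Set.mem_setOf_eq, map_add]
      linarith
    · intro h
      refine ⟨z - zt, ?_, zt, rfl, sub_add_cancel z zt⟩
      simp only [Sopen, Set.mem_setOf_eq, map_sub]
      simp only [Set.mem_setOf_eq] at h
      linarith
  -- membership characterization of a x + K
  have hmem : ∀ x z, z ∈ a x + K ↔ x ∈ C ∧ x' x + z' z < z' zt := by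
    intro x z
    by_cases hx : x ∈ C
    · constructor
      · rintro ⟨w, hw, k, hk, rfl⟩
        rw [haxeq x hx] at hw
        simp only [Set.mem_setOf_eq] at hw
        have := hz'neg k hk
        refine ⟨hx, ?_⟩
        simp only [map_add]
        linarith
      · rintro ⟨-, h⟩
        refine ⟨z, ?_, 0, h0K, add_zero z⟩
        rw [haxeq x hx]
        exact h
    · rw [ha x, if_neg hx]
      simp [Set.empty_add, hx]
  obtain ⟨S, hS⟩ := hC
  have hCiff : ∀ x : X, x ∈ C ↔ ∀ p ∈ S, p.1 x < p.2 := by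
    intro x
    rw [hS]
    simp
  constructor
  · refine ⟨(fun p : (X →L[ℝ] ℝ) × ℝ =>
      ((p.1.comp (ContinuousLinearMap.fst ℝ X Z)), p.2)) '' S ∪
      {(x'.comp (ContinuousLinearMap.fst ℝ X Z) + z'.comp (ContinuousLinearMap.snd ℝ X Z),
        z' zt)}, ?_⟩
    ext ⟨x, z⟩
    simp only [epiK, Set.mem_setOf_eq, hmem x z, hCiff x, Set.mem_iInter, Set.mem_union,
      Set.mem_image, Set.mem_singleton_iff]
    constructor
    · rintro ⟨h1, h2⟩ p hp
      rcases hp with ⟨q, hq, rfl⟩ | rfl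
      · simpa using h1 q hq
      · simpa [sub_pos] using h2
    · intro h
      constructor
      · intro p hp
        simpa using h _ (Or.inl ⟨p, hp, rfl⟩)
      · simpa [sub_pos] using h _ (Or.inr rfl)
  · intro x
    by_cases hx : x ∈ C
    · have hK' : a x + K = a x := by
        ext z
        rw [hmem x z, haxeq x hx]
        simp [hx]
      rw [hK', haxeq x hx]
      symm
      apply eco_of_isEConvex
      refine ⟨{(z', z' zt - x' x)}, ?_⟩
      ext z
      simp only [Set.mem_iInter, Set.mem_singleton_iff, Set.mem_setOf_eq]
      constructor
      · intro h p hp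
        subst hp
        simp only
        linarith
      · intro h
        have := h _ rfl
        simp only at this
        linarith
    · have h1 : a x + K = ∅ := by
        rw [ha x, if_neg hx, Set.empty_add]
      rw [h1, ha x, if_neg hx, eco_of_isEConvex isEConvex_empty']

end
end

section
/- Let f : X → 𝒫(Z) be a set-valued function. For every (x*, y*, z*, α) ∈ X*×X*×(K*∖{0})×ℝ: −f^c(x*,y*,z*,α) = {z ∈ Z : ⟨z,z*⟩ < σ_f(x*,y*,z*,α)} if η_{epi_K f}(x*,z*) = 0, and −f^c(x*,y*,z*,α) = {z ∈ Z : ⟨z,z*⟩ ≤ σ_f(x*,y*,z*,α)} if η_{epi_K f}(x*,z*) = 1 (the inequalities read in ℝ∪{±∞}). Consequently, f^c(x*,y*,z*,α) ≠ ∅ if and only if σ_f(x*,y*,z*,α) < +∞, i.e., dom f^c = dom σ_f. -/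
open scoped Classical Pointwise
noncomputable section

variable {X : Type*} [AddCommGroup X] [Module ℝ X] [TopologicalSpace X]
  [IsTopologicalAddGroup X] [ContinuousSMul ℝ X]
variable {Z : Type*} [AddCommGroup Z] [Module ℝ Z] [TopologicalSpace Z]
  [IsTopologicalAddGroup Z] [ContinuousSMul ℝ Z]

lemma my_eco_eq_self {C : Set Z} (h : IsEConvex C) : eco C = C :=
  subset_antisymm (Set.sInter_subset_of_mem ⟨h, subset_rfl⟩)
    (Set.subset_sInter fun _ hD => hD.2)

lemma my_isEConvex_empty : IsEConvex (∅ : Set Z) := by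
  refine ⟨{((0 : Z →L[ℝ] ℝ), (0 : ℝ))}, ?_⟩
  ext z; simp

lemma my_isEConvex_univ : IsEConvex (Set.univ : Set Z) := ⟨∅, by simp⟩

lemma my_isEConvex_open (z' : Z →L[ℝ] ℝ) (c : ℝ) : IsEConvex {z | z' z < c} := by
  refine ⟨{(z', c)}, ?_⟩
  ext z; simp

lemma my_isEConvex_closed (z' : Z →L[ℝ] ℝ) (c : ℝ) : IsEConvex {z | z' z ≤ c} := by
  refine ⟨(fun b => (z', b)) '' Set.Ioi c, ?_⟩
  ext z
  simp only [Set.mem_setOf_eq, Set.mem_iInter, Set.mem_image, Set.mem_Ioi]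
  constructor
  · rintro h p ⟨b, hb, rfl⟩
    exact lt_of_le_of_lt h hb
  · intro h
    by_contra hlt
    push_neg at hlt
    exact absurd (h (z', z' z) ⟨z' z, hlt, rfl⟩) (lt_irrefl _)

lemma my_negSet_empty : negSet (∅ : Set Z) = Set.univ := by simp [negSet]

lemma my_negSet_univ : negSet (Set.univ : Set Z) = ∅ := by
  have hZ : Nonempty Z := ⟨0⟩
  rw [negSet, if_neg (Set.Nonempty.ne_empty ⟨0, Set.mem_univ 0⟩), if_pos rfl]

lemma my_negSet_negSet (A : Set Z) : negSet (negSet A) = A := by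
  rcases eq_or_ne A ∅ with h | h
  · rw [h, my_negSet_empty, my_negSet_univ]
  rcases eq_or_ne A Set.univ with h2 | h2
  · rw [h2, my_negSet_univ, my_negSet_empty]
  have h3 : negSet A = -A := by rw [negSet, if_neg h, if_neg h2]
  have h4 : -A ≠ ∅ := by
    obtain ⟨a, ha⟩ := Set.nonempty_iff_ne_empty.2 h
    intro he
    have hm : -a ∈ -A := by simpa [Set.mem_neg]
    rw [he] at hm; exact hm
  have h5 : -A ≠ Set.univ := fun he => h2 (by rw [← neg_neg A, he, Set.neg_univ])
  rw [h3, negSet, if_neg h4, if_neg h5, neg_neg]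

lemma my_exists_eq (z' : Z →L[ℝ] ℝ) (h : z' ≠ 0) (r : ℝ) : ∃ z, z' z = r := by
  obtain ⟨z₀, hz₀⟩ : ∃ z₀, z' z₀ ≠ 0 := by
    by_contra h'
    push_neg at h'
    exact h (by ext z; simp [h' z])
  refine ⟨(r / z' z₀) • z₀, ?_⟩
  rw [map_smul, smul_eq_mul, div_mul_cancel₀ _ hz₀]

lemma my_neg_nonempty {A : Set Z} (h : A ≠ ∅) : (-A : Set Z) ≠ ∅ := by
  obtain ⟨a, ha⟩ := Set.nonempty_iff_ne_empty.2 h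
  intro he
  have hm : -a ∈ -A := by simpa [Set.mem_neg]
  rw [he] at hm; exact hm


theorem stmt13 [T2Space X] [LocallyConvexSpace ℝ X] [T2Space Z] [LocallyConvexSpace ℝ Z]
    (K : Set Z) (hKconv : Convex ℝ K) (hKcone : ∀ c : ℝ, 0 < c → c • K ⊆ K)
    (hK0 : ({0} : Set Z) ⊂ K) (hKtop : K ≠ Set.univ)
    (f : X → Set Z) (x' y' : X →L[ℝ] ℝ) (z' : Z →L[ℝ] ℝ) (α : ℝ)
    (hz' : z' ∈ negPolar K \ {0}) :
    (etaSet (epiK K f) x' z' = 0 →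
      negSet (cConj K f (x', y', z', α)) =
        {z : Z | ((z' z : ℝ) : EReal) < sigmaF K f (x', y', z', α)}) ∧
    (etaSet (epiK K f) x' z' = 1 →
      negSet (cConj K f (x', y', z', α)) =
        {z : Z | ((z' z : ℝ) : EReal) ≤ sigmaF K f (x', y', z', α)}) ∧
    (cConj K f (x', y', z', α) ≠ ∅ ↔ sigmaF K f (x', y', z', α) < ⊤) := by
  have hZ : Nonempty Z := ⟨0⟩
  have h0K : (0 : Z) ∈ K := hK0.1 rfl
  have hz'0 : z' ≠ 0 := hz'.2
  by_cases hdom : svDom f ⊆ {x | y' x < α}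
  · -- "domain inside half-space" case
    set C := epiK K f with hC
    set S : EReal := ⨆ p ∈ C, ((x' p.1 + z' p.2 : ℝ) : EReal) with hS
    have hσ : sigmaF K f (x', y', z', α) = S := by
      rw [sigmaF, if_pos hdom]
    set D : Set Z := ⋃ x : X, (f x + Sclosed x' z' (-x)) with hD
    have hcc : cConj K f (x', y', z', α) = negSet (eco D) := by
      rw [cConj, if_pos ⟨hz', hdom⟩]
    have hnn : negSet (cConj K f (x', y', z', α)) = eco D := by
      rw [hcc, my_negSet_negSet]
    have hDmem : ∀ z : Z, z ∈ D ↔ ∃ p ∈ C, z' z ≤ x' p.1 + z' p.2 := by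
      intro z
      constructor
      · intro hz
        rw [hD, Set.mem_iUnion] at hz
        obtain ⟨x, hx⟩ := hz
        rw [Set.mem_add] at hx
        obtain ⟨u, hu, s, hs, hus⟩ := hx
        have hs' : x' (-x) + z' s ≤ 0 := hs
        rw [map_neg] at hs'
        refine ⟨(x, u), ⟨u, hu, 0, h0K, add_zero u⟩, ?_⟩
        have : z' z = z' u + z' s := by rw [← hus, map_add]
        simp only
        linarith
      · rintro ⟨⟨x, v⟩, hpv, hle⟩
        have hv : v ∈ f x + K := hpv
        rw [Set.mem_add] at hv
        obtain ⟨u, hu, k, hk, huk⟩ := hv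
        have hzk : z' k ≤ 0 := hz'.1 k hk
        have hvk : z' v = z' u + z' k := by rw [← huk, map_add]
        rw [hD, Set.mem_iUnion]
        refine ⟨x, Set.mem_add.2 ⟨u, hu, z - u, ?_, by abel⟩⟩
        show x' (-x) + z' (z - u) ≤ 0
        rw [map_neg, map_sub]
        simp only at hle
        linarith
      -- end characterization
    rcases eq_or_ne C ∅ with hCe | hCe
    · -- empty epigraph
      have hSbot : S = ⊥ := by rw [hS, hCe]; simp
      have hDe : D = ∅ := by
        ext z
        simp only [Set.mem_empty_iff_false, iff_false]
        intro hz
        obtain ⟨p, hp, -⟩ := (hDmem z).1 hz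
        rw [hCe] at hp; exact hp
      have heta : etaSet C x' z' = 0 := by
        rw [etaSet, if_pos]
        intro p hp
        rw [hCe] at hp; exact absurd hp (Set.notMem_empty p)
      refine ⟨?_, ?_, ?_⟩
      · intro _
        rw [hnn, hσ, hDe, my_eco_eq_self my_isEConvex_empty, hSbot]
        ext z
        simp only [Set.mem_empty_iff_false, Set.mem_setOf_eq, false_iff, not_lt]
        exact bot_le
      · intro h1
        rw [heta] at h1; exact absurd h1 (by norm_num)
      · rw [hcc, hDe, my_eco_eq_self my_isEConvex_empty, my_negSet_empty, hσ, hSbot]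
        exact iff_of_true (Set.Nonempty.ne_empty ⟨0, Set.mem_univ 0⟩) (by simp)
    · obtain ⟨p₀, hp₀⟩ := Set.nonempty_iff_ne_empty.2 hCe
      have hle_S : ∀ p ∈ C, ((x' p.1 + z' p.2 : ℝ) : EReal) ≤ S := by
        intro p hp
        exact le_iSup₂ (f := fun p (_ : p ∈ C) => ((x' p.1 + z' p.2 : ℝ) : EReal)) p hp
      have hSbot : S ≠ ⊥ := by
        intro hb
        have := hle_S p₀ hp₀
        rw [hb, le_bot_iff] at this
        exact (EReal.coe_ne_bot _) this
      rcases eq_or_ne S ⊤ with hStop | hStop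
      · -- supremum is +∞
        have hDu : D = Set.univ := by
          ext z
          simp only [Set.mem_univ, iff_true]
          rw [hDmem]
          by_contra hno
          push_neg at hno
          have : S ≤ ((z' z : ℝ) : EReal) := by
            refine iSup₂_le fun p hp => ?_
            exact_mod_cast le_of_lt (hno p hp)
          rw [hStop] at this
          exact absurd (lt_of_le_of_lt this (EReal.coe_lt_top _)) (lt_irrefl _)
        have heta : etaSet C x' z' = 0 := by
          rw [etaSet, if_pos]
          intro p hp
          rw [← hS, hStop]
          exact EReal.coe_lt_top _
        refine ⟨?_, ?_, ?_⟩
        · intro _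
          rw [hnn, hσ, hDu, my_eco_eq_self my_isEConvex_univ, hStop]
          ext z
          simp [EReal.coe_lt_top]
        · intro h1
          rw [heta] at h1; exact absurd h1 (by norm_num)
        · rw [hcc, hDu, my_eco_eq_self my_isEConvex_univ, my_negSet_univ, hσ, hStop]
          exact iff_of_false (by simp) (lt_irrefl _)
      · -- supremum is a real number σ
        set σ : ℝ := S.toReal with hσdef
        have hσS : (σ : EReal) = S := EReal.coe_toReal hStop hSbot
        have hkey : ∀ p ∈ C, x' p.1 + z' p.2 ≤ σ := by
          intro p hp
          have := hle_S p hp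
          rw [← hσS] at this
          exact_mod_cast this
        by_cases hatt : ∀ p ∈ C, ((x' p.1 + z' p.2 : ℝ) : EReal) < ⨆ q ∈ C, ((x' q.1 + z' q.2 : ℝ) : EReal)
        · -- supremum not attained : η = 0
          have heta : etaSet C x' z' = 0 := by rw [etaSet, if_pos hatt]
          have hDset : D = {z | z' z < σ} := by
            ext z
            rw [hDmem]
            simp only [Set.mem_setOf_eq]
            constructor
            · rintro ⟨p, hp, hle⟩
              have h1 := hatt p hp
              rw [← hS, ← hσS, EReal.coe_lt_coe_iff] at h1
              linarith
            · intro hlt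
              by_contra hno
              push_neg at hno
              have : S ≤ ((z' z : ℝ) : EReal) := by
                refine iSup₂_le fun p hp => ?_
                exact_mod_cast le_of_lt (hno p hp)
              rw [← hσS, EReal.coe_le_coe_iff] at this
              linarith
          have hecoD : eco D = D := by
            rw [hDset]; exact my_eco_eq_self (my_isEConvex_open z' σ)
          refine ⟨?_, ?_, ?_⟩
          · intro _
            rw [hnn, hσ, hecoD, hDset]
            ext z
            simp only [Set.mem_setOf_eq]
            rw [← hσS, EReal.coe_lt_coe_iff]
          · intro h1
            rw [heta] at h1; exact absurd h1 (by norm_num)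
          · refine iff_of_true ?_ (by rw [hσ]; exact Ne.lt_top hStop)
            rw [hcc, hecoD, hDset]
            obtain ⟨z₁, hz₁⟩ := my_exists_eq z' hz'0 (σ - 1)
            obtain ⟨z₂, hz₂⟩ := my_exists_eq z' hz'0 σ
            have hne : {z | z' z < σ} ≠ ∅ := by
              intro he
              have : z₁ ∈ {z | z' z < σ} := by simp [hz₁]
              rw [he] at this; exact this
            have hnu : {z | z' z < σ} ≠ Set.univ := by
              intro hu
              have : z₂ ∈ {z | z' z < σ} := hu ▸ Set.mem_univ z₂
              simp [hz₂] at this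
            rw [negSet, if_neg hne, if_neg hnu]
            exact my_neg_nonempty hne
        · -- supremum attained : η = 1
          have heta : etaSet C x' z' = 1 := by rw [etaSet, if_neg hatt]
          push_neg at hatt
          obtain ⟨p₁, hp₁, hge⟩ := hatt
          rw [← hS] at hge
          have hval : x' p₁.1 + z' p₁.2 = σ := by
            refine le_antisymm (hkey p₁ hp₁) ?_
            rw [← hσS] at hge
            exact_mod_cast hge
          have hDset : D = {z | z' z ≤ σ} := by
            ext z
            rw [hDmem]
            simp only [Set.mem_setOf_eq]
            constructor
            · rintro ⟨p, hp, hle⟩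
              exact le_trans hle (hkey p hp)
            · intro hle
              exact ⟨p₁, hp₁, by rw [hval]; exact hle⟩
          have hecoD : eco D = D := by
            rw [hDset]; exact my_eco_eq_self (my_isEConvex_closed z' σ)
          refine ⟨?_, ?_, ?_⟩
          · intro h0
            rw [heta] at h0; exact absurd h0 (by norm_num)
          · intro _
            rw [hnn, hσ, hecoD, hDset]
            ext z
            simp only [Set.mem_setOf_eq]
            rw [← hσS, EReal.coe_le_coe_iff]
          · refine iff_of_true ?_ (by rw [hσ]; exact Ne.lt_top hStop)
            rw [hcc, hecoD, hDset]
            obtain ⟨z₁, hz₁⟩ := my_exists_eq z' hz'0 σ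
            obtain ⟨z₂, hz₂⟩ := my_exists_eq z' hz'0 (σ + 1)
            have hne : {z | z' z ≤ σ} ≠ ∅ := by
              intro he
              have : z₁ ∈ {z | z' z ≤ σ} := by simp [hz₁]
              rw [he] at this; exact this
            have hnu : {z | z' z ≤ σ} ≠ Set.univ := by
              intro hu
              have : z₂ ∈ {z | z' z ≤ σ} := hu ▸ Set.mem_univ z₂
              rw [Set.mem_setOf_eq, hz₂] at this
              linarith
            rw [negSet, if_neg hne, if_neg hnu]
            exact my_neg_nonempty hne
  · -- domain not inside half-space
    have hcc : cConj K f (x', y', z', α) = ∅ := by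
      rw [cConj, if_neg]
      intro h
      exact hdom h.2
    have hσ : sigmaF K f (x', y', z', α) = ⊤ := by
      rw [sigmaF, if_neg hdom]
    refine ⟨?_, ?_, ?_⟩
    · intro _
      rw [hcc, my_negSet_empty, hσ]
      ext z
      simp [EReal.coe_lt_top]
    · intro _
      rw [hcc, my_negSet_empty, hσ]
      ext z
      simp
    · rw [hcc, hσ]
      exact iff_of_false (by simp) (lt_irrefl _)


end
end

section
/- Let C ⊆ X and D ⊆ Z be nonempty sets. Then C and D are both e-convex if and only if the product C × D is an e-convex subset of X × Z (with the product topology). -/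
open scoped Classical Pointwise
noncomputable section

variable {X : Type*} [AddCommGroup X] [Module ℝ X] [TopologicalSpace X]
  [IsTopologicalAddGroup X] [ContinuousSMul ℝ X]
variable {Z : Type*} [AddCommGroup Z] [Module ℝ Z] [TopologicalSpace Z]
  [IsTopologicalAddGroup Z] [ContinuousSMul ℝ Z]

theorem stmt19 [T2Space X] [LocallyConvexSpace ℝ X] [T2Space Z] [LocallyConvexSpace ℝ Z]
    (C : Set X) (D : Set Z) (hC : C.Nonempty) (hD : D.Nonempty) :
    (IsEConvex C ∧ IsEConvex D) ↔ IsEConvex (C ×ˢ D) := by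
  constructor
  · rintro ⟨⟨SC, hSC⟩, ⟨SD, hSD⟩⟩
    refine ⟨(fun q => (q.1.comp (ContinuousLinearMap.fst ℝ X Z), q.2)) '' SC ∪
      (fun q => (q.1.comp (ContinuousLinearMap.snd ℝ X Z), q.2)) '' SD, ?_⟩
    ext ⟨x, z⟩
    constructor
    · rintro ⟨hx, hz⟩
      simp only [Set.mem_iInter, Set.mem_union, Set.mem_image]
      rintro p (⟨q, hq, rfl⟩ | ⟨q, hq, rfl⟩)
      · have := hSC ▸ hx
        simpa using Set.mem_iInter₂.1 this q hq
      · have := hSD ▸ hz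
        simpa using Set.mem_iInter₂.1 this q hq
    · intro h
      simp only [Set.mem_iInter] at h
      constructor
      · rw [hSC]
        refine Set.mem_iInter₂.2 fun q hq => ?_
        have := h (q.1.comp (ContinuousLinearMap.fst ℝ X Z), q.2)
          (Or.inl ⟨q, hq, rfl⟩)
        simpa using this
      · rw [hSD]
        refine Set.mem_iInter₂.2 fun q hq => ?_
        have := h (q.1.comp (ContinuousLinearMap.snd ℝ X Z), q.2)
          (Or.inr ⟨q, hq, rfl⟩)
        simpa using this
  · rintro ⟨S, hS⟩
    obtain ⟨c₀, hc₀⟩ := hC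
    obtain ⟨d₀, hd₀⟩ := hD
    constructor
    · refine ⟨(fun p => (p.1.comp (ContinuousLinearMap.inl ℝ X Z),
        p.2 - p.1 (0, d₀))) '' S, ?_⟩
      ext x
      constructor
      · intro hx
        refine Set.mem_iInter₂.2 ?_
        rintro p ⟨q, hq, rfl⟩
        have hxz : (x, d₀) ∈ C ×ˢ D := ⟨hx, hd₀⟩
        rw [hS] at hxz
        have := Set.mem_iInter₂.1 hxz q hq
        simp only [Set.mem_setOf_eq] at this ⊢
        have hsum : q.1 (x, d₀) = q.1 (x, 0) + q.1 (0, d₀) := by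
          rw [← map_add]; norm_num
        simp only [ContinuousLinearMap.comp_apply, ContinuousLinearMap.inl_apply]
        linarith
      · intro hx
        have hxz : (x, d₀) ∈ C ×ˢ D := by
          rw [hS]
          refine Set.mem_iInter₂.2 fun q hq => ?_
          have := Set.mem_iInter₂.1 hx (q.1.comp (ContinuousLinearMap.inl ℝ X Z),
            q.2 - q.1 (0, d₀)) ⟨q, hq, rfl⟩
          simp only [Set.mem_setOf_eq, ContinuousLinearMap.comp_apply,
            ContinuousLinearMap.inl_apply] at this ⊢
          have hsum : q.1 (x, d₀) = q.1 (x, 0) + q.1 (0, d₀) := by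
            rw [← map_add]; norm_num
          linarith
        exact hxz.1
    · refine ⟨(fun p => (p.1.comp (ContinuousLinearMap.inr ℝ X Z),
        p.2 - p.1 (c₀, 0))) '' S, ?_⟩
      ext z
      constructor
      · intro hz
        refine Set.mem_iInter₂.2 ?_
        rintro p ⟨q, hq, rfl⟩
        have hxz : (c₀, z) ∈ C ×ˢ D := ⟨hc₀, hz⟩
        rw [hS] at hxz
        have := Set.mem_iInter₂.1 hxz q hq
        simp only [Set.mem_setOf_eq] at this ⊢
        have hsum : q.1 (c₀, z) = q.1 (0, z) + q.1 (c₀, 0) := by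
          rw [← map_add]; norm_num
        simp only [ContinuousLinearMap.comp_apply, ContinuousLinearMap.inr_apply]
        linarith
      · intro hz
        have hxz : (c₀, z) ∈ C ×ˢ D := by
          rw [hS]
          refine Set.mem_iInter₂.2 fun q hq => ?_
          have := Set.mem_iInter₂.1 hz (q.1.comp (ContinuousLinearMap.inr ℝ X Z),
            q.2 - q.1 (c₀, 0)) ⟨q, hq, rfl⟩
          simp only [Set.mem_setOf_eq, ContinuousLinearMap.comp_apply,
            ContinuousLinearMap.inr_apply] at this ⊢
          have hsum : q.1 (c₀, z) = q.1 (0, z) + q.1 (c₀, 0) := by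
            rw [← map_add]; norm_num
          linarith
        exact hxz.2

end
end
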